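/- arXiv:2205.01535 — 2 statements merged into one kernel-verified Lean document; each statement's English description precedes it below -/
import Mathlib

section
/- Let θ_1 < ... < θ_m be real and s ∈ ℂ \ ℝ, with q(λ) = (λ−s)^{m−1}. For each k ∈ {1,...,m−1} there exists a rational function r(λ) = g(λ)/|q(λ)|² with g a real polynomial of degree ≤ 2m−2 such that r(θ_k) = r(θ_{k+1}) = 1, r(θ_j) = 0 for j ∉ {k, k+1}, r(λ) ≥ 1 on [θ_k, θ_{k+1}], and r(λ) ≥ 0 on ℝ \ [θ_k, θ_{k+1}]. -/
open Finset in
lemma my_mahler {ι : Type*} (s : Finset ι) (hs : s.Nonempty) (x y : ι → ℝ)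
    (hx : ∀ i ∈ s, 0 ≤ x i) (hy : ∀ i ∈ s, 0 ≤ y i) {c d : ℝ} (hc : 0 ≤ c) (hd : 0 ≤ d)
    (hxc : ∏ i ∈ s, x i = c ^ s.card) (hyd : ∏ i ∈ s, y i = d ^ s.card) :
    (c + d) ^ s.card ≤ ∏ i ∈ s, (x i + y i) := by
  have hn : s.card ≠ 0 := Finset.card_ne_zero.2 hs
  by_cases h0 : ∃ i ∈ s, x i + y i = 0
  · obtain ⟨i, his, hi⟩ := h0
    have hxi : x i = 0 := le_antisymm (by nlinarith [hx i his, hy i his]) (hx i his)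
    have hyi : y i = 0 := by nlinarith [hx i his, hy i his]
    have hc0 : c = 0 := by
      have : c ^ s.card = 0 := by rw [← hxc]; exact Finset.prod_eq_zero his hxi
      exact pow_eq_zero_iff hn |>.1 this
    have hd0 : d = 0 := by
      have : d ^ s.card = 0 := by rw [← hyd]; exact Finset.prod_eq_zero his hyi
      exact pow_eq_zero_iff hn |>.1 this
    rw [hc0, hd0, add_zero, zero_pow hn]
    exact Finset.prod_nonneg fun j hj => add_nonneg (hx j hj) (hy j hj)
  · push_neg at h0
    have hpos : ∀ i ∈ s, 0 < x i + y i := fun i hi =>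
      lt_of_le_of_ne (add_nonneg (hx i hi) (hy i hi)) (Ne.symm (h0 i hi))
    set n := s.card with hncard
    set w : ι → ℝ := fun _ => (n : ℝ)⁻¹ with hw
    have hnpos : (0:ℝ) < n := by positivity
    have hwsum : ∑ i ∈ s, w i = 1 := by
      simp [hw, Finset.sum_const, hncard]
      field_simp
    have key : ∀ z : ι → ℝ, (∀ i ∈ s, 0 ≤ z i) →
        (∏ i ∈ s, z i) ^ ((n:ℝ)⁻¹) ≤ ∑ i ∈ s, w i * (z i / (x i + y i)) *
          1 → True := fun _ _ _ => trivial
    -- AM-GM for x/(x+y)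
    have amgm : ∀ z : ι → ℝ, (∀ i ∈ s, 0 ≤ z i) →
        ((∏ i ∈ s, z i) / ∏ i ∈ s, (x i + y i)) ^ ((n:ℝ)⁻¹)
          ≤ ∑ i ∈ s, w i * (z i / (x i + y i)) := by
      intro z hz
      have h1 : ∀ i ∈ s, 0 ≤ z i / (x i + y i) := fun i hi =>
        div_nonneg (hz i hi) (hpos i hi).le
      have := Real.geom_mean_le_arith_mean_weighted s w (fun i => z i / (x i + y i))
        (fun i _ => by positivity) hwsum h1
      calc ((∏ i ∈ s, z i) / ∏ i ∈ s, (x i + y i)) ^ ((n:ℝ)⁻¹)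
          = (∏ i ∈ s, z i / (x i + y i)) ^ ((n:ℝ)⁻¹) := by rw [Finset.prod_div_distrib]
        _ = ∏ i ∈ s, (z i / (x i + y i)) ^ ((n:ℝ)⁻¹) := by
            rw [Real.finset_prod_rpow s _ h1]
        _ ≤ ∑ i ∈ s, w i * (z i / (x i + y i)) := this
    have hPxy : 0 < ∏ i ∈ s, (x i + y i) := Finset.prod_pos hpos
    have hsum : (∑ i ∈ s, w i * (x i / (x i + y i))) + ∑ i ∈ s, w i * (y i / (x i + y i)) = 1 := by
      rw [← Finset.sum_add_distrib, ← hwsum]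
      refine Finset.sum_congr rfl fun i hi => ?_
      have h := (hpos i hi).ne'
      field_simp
    have hX := amgm x hx
    have hY := amgm y hy
    rw [hxc] at hX; rw [hyd] at hY
    have hcn : ((c ^ n : ℝ)) ^ ((n:ℝ)⁻¹) = c := Real.pow_rpow_inv_natCast hc hn
    have hdn : ((d ^ n : ℝ)) ^ ((n:ℝ)⁻¹) = d := Real.pow_rpow_inv_natCast hd hn
    have hdiv : ∀ e : ℝ, 0 ≤ e → (e / ∏ i ∈ s, (x i + y i)) ^ ((n:ℝ)⁻¹)
        = e ^ ((n:ℝ)⁻¹) / (∏ i ∈ s, (x i + y i)) ^ ((n:ℝ)⁻¹) := fun e he =>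
      Real.div_rpow he hPxy.le _
    rw [hdiv _ (by positivity), hcn] at hX
    rw [hdiv _ (by positivity), hdn] at hY
    have hProot : 0 < (∏ i ∈ s, (x i + y i)) ^ ((n:ℝ)⁻¹) := Real.rpow_pos_of_pos hPxy _
    have hcd : c + d ≤ (∏ i ∈ s, (x i + y i)) ^ ((n:ℝ)⁻¹) := by
      have := add_le_add hX hY
      rw [hsum, ← add_div, div_le_one hProot] at this
      exact this
    calc (c + d) ^ n ≤ ((∏ i ∈ s, (x i + y i)) ^ ((n:ℝ)⁻¹)) ^ n :=
          pow_le_pow_left₀ (by positivity) hcd n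
      _ = ∏ i ∈ s, (x i + y i) := Real.rpow_inv_natCast_pow hPxy.le hn

lemma my_sqrt_cross (p q v : ℝ) : p*q + v^2 ≤ Real.sqrt (p^2+v^2) * Real.sqrt (q^2+v^2) := by
  rw [← Real.sqrt_mul (by positivity)]
  rcases le_or_gt (p*q + v^2) 0 with h | h
  · exact h.trans (Real.sqrt_nonneg _)
  · rw [show ((p^2+v^2)*(q^2+v^2)) = (p*q+v^2)^2 + v^2*(p-q)^2 by ring]
    calc p*q+v^2 = Real.sqrt ((p*q+v^2)^2) := (Real.sqrt_sq h.le).symm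
      _ ≤ _ := Real.sqrt_le_sqrt (by nlinarith [sq_nonneg (v*(p-q))])

lemma my_sqrt_affine (u v a b t : ℝ) (ht0 : 0 ≤ t) (ht1 : t ≤ 1) :
    Real.sqrt (((1-t)*a + t*b - u)^2 + v^2)
      ≤ (1-t) * Real.sqrt ((a-u)^2+v^2) + t * Real.sqrt ((b-u)^2+v^2) := by
  have h1 := Real.sq_sqrt (show (0:ℝ) ≤ (a-u)^2+v^2 by positivity)
  have h2 := Real.sq_sqrt (show (0:ℝ) ≤ (b-u)^2+v^2 by positivity)
  have hS1 := Real.sqrt_nonneg ((a-u)^2+v^2)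
  have hS2 := Real.sqrt_nonneg ((b-u)^2+v^2)
  have hcross := my_sqrt_cross (a-u) (b-u) v
  have hR : (0:ℝ) ≤ (1-t) * Real.sqrt ((a-u)^2+v^2) + t * Real.sqrt ((b-u)^2+v^2) := by
    have : 0 ≤ 1 - t := by linarith
    positivity
  calc Real.sqrt (((1-t)*a + t*b - u)^2 + v^2)
      ≤ Real.sqrt (((1-t) * Real.sqrt ((a-u)^2+v^2) + t * Real.sqrt ((b-u)^2+v^2))^2) := by
        apply Real.sqrt_le_sqrt
        set S1 := Real.sqrt ((a-u)^2+v^2)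
        set S2 := Real.sqrt ((b-u)^2+v^2)
        have e : ((1-t)*S1+t*S2)^2 - (((1-t)*a+t*b-u)^2+v^2)
            = (1-t)^2*(S1^2 - ((a-u)^2+v^2)) + t^2*(S2^2-((b-u)^2+v^2))
              + 2*(t*(1-t))*(S1*S2 - ((a-u)*(b-u)+v^2)) := by ring
        have h3 : 0 ≤ 2*(t*(1-t))*(S1*S2 - ((a-u)*(b-u)+v^2)) :=
          mul_nonneg (by nlinarith) (sub_nonneg.2 hcross)
        rw [h1, h2] at e
        have e2 : ((1-t)*S1+t*S2)^2 - (((1-t)*a+t*b-u)^2+v^2)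
            = 2*(t*(1-t))*(S1*S2 - ((a-u)*(b-u)+v^2)) := by rw [e]; ring
        linarith
    _ = _ := Real.sqrt_sq hR

open Polynomial Finset

set_option maxHeartbeats 1000000 in
/-- Rational majorant for a complex-conjugate pair of poles: for
nodes `θ_1 < … < θ_m`, `s ∈ ℂ \ ℝ`, `q(λ) = (λ−s)^{m−1}` (so that
`|q(λ)|² = ((λ−Re s)² + (Im s)²)^{m−1}` for real `λ`), and each `k < m`, there is a
rational function `r(λ) = g(λ)/|q(λ)|²` with `g` a real polynomial of degree
`≤ 2m−2` such that `r(θ_k) = r(θ_{k+1}) = 1`, `r(θ_j) = 0` otherwise, `r ≥ 1` on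
`[θ_k, θ_{k+1}]` and `r ≥ 0` on `ℝ \ [θ_k, θ_{k+1}]`. -/
theorem stmt_18 {m : ℕ} (θ : Fin m → ℝ) (hθ : StrictMono θ)
    (s : ℂ) (hs : s.im ≠ 0)
    (k : Fin m) (hk : (k : ℕ) + 1 < m) :
    ∃ g : Polynomial ℝ, g.natDegree ≤ 2 * m - 2 ∧
      (g.eval (θ k) / ((θ k - s.re) ^ 2 + s.im ^ 2) ^ (m - 1) = 1) ∧
      (g.eval (θ ⟨(k : ℕ) + 1, hk⟩) /
        ((θ ⟨(k : ℕ) + 1, hk⟩ - s.re) ^ 2 + s.im ^ 2) ^ (m - 1) = 1) ∧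
      (∀ j : Fin m, j ≠ k → j ≠ ⟨(k : ℕ) + 1, hk⟩ →
        g.eval (θ j) / ((θ j - s.re) ^ 2 + s.im ^ 2) ^ (m - 1) = 0) ∧
      (∀ x : ℝ, θ k ≤ x → x ≤ θ ⟨(k : ℕ) + 1, hk⟩ →
        1 ≤ g.eval x / ((x - s.re) ^ 2 + s.im ^ 2) ^ (m - 1)) ∧
      (∀ x : ℝ, x < θ k ∨ θ ⟨(k : ℕ) + 1, hk⟩ < x →
        0 ≤ g.eval x / ((x - s.re) ^ 2 + s.im ^ 2) ^ (m - 1)) := by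
  classical
  set k₁ : Fin m := ⟨(k : ℕ) + 1, hk⟩ with hk₁
  have hm2 : 2 ≤ m := by omega
  have hkk₁ : k ≠ k₁ := by
    intro h; apply_fun Fin.val at h; simp [hk₁] at h
  have hklt : k < k₁ := by simp [Fin.lt_def, hk₁]
  set a := θ k with ha
  set b := θ k₁ with hb
  have hab : a < b := hθ hklt
  have hba : b - a ≠ 0 := sub_ne_zero.2 hab.ne'
  set u := s.re
  set v := s.im
  set W : ℝ → ℝ := fun x => (x - u) ^ 2 + v ^ 2 with hWdef
  have hW : ∀ x, 0 < W x := fun x => by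
    have : v ^ 2 > 0 := by positivity
    simp only [hWdef]; positivity
  set n := m - 1 with hn
  set s' : Finset (Fin m) := Finset.univ.erase k₁ with hs'
  have hks' : k ∈ s' := Finset.mem_erase.2 ⟨hkk₁, Finset.mem_univ k⟩
  set T : Finset (Fin m) := s'.erase k with hT
  have hs'card : s'.card = m - 1 := by
    rw [hs', Finset.card_erase_of_mem (Finset.mem_univ _), Finset.card_univ, Fintype.card_fin]
  have hTcard : T.card = m - 2 := by
    rw [hT, Finset.card_erase_of_mem hks', hs'card]; omega
  have hTmem : ∀ j, j ∈ T ↔ j ≠ k ∧ j ≠ k₁ := by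
    intro j
    simp [hT, hs', Finset.mem_erase, and_comm]
  set A := Real.sqrt (W a) with hA
  set B := Real.sqrt (W b) with hB
  have hA2 : A ^ 2 = W a := Real.sq_sqrt (hW a).le
  have hB2 : B ^ 2 = W b := Real.sq_sqrt (hW b).le
  have hApos : 0 < A := Real.sqrt_pos.2 (hW a)
  have hBpos : 0 < B := Real.sqrt_pos.2 (hW b)
  set PP := ∏ j ∈ T, |a - θ j| with hPP
  set QQ := ∏ j ∈ T, |b - θ j| with hQQ
  have hPPpos : 0 < PP := Finset.prod_pos fun j hj => abs_pos.2
    (sub_ne_zero.2 fun h => ((hTmem j).1 hj).1 (hθ.injective h.symm))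
  have hQQpos : 0 < QQ := Finset.prod_pos fun j hj => abs_pos.2
    (sub_ne_zero.2 fun h => ((hTmem j).1 hj).2 (hθ.injective h.symm))
  set α := A ^ n / PP with hα
  set β := B ^ n / QQ with hβ
  have hαpos : 0 < α := by positivity
  have hβpos : 0 < β := by positivity
  set ℓ : Polynomial ℝ := Polynomial.C (α / (b - a)) * (Polynomial.C b - Polynomial.X)
    + Polynomial.C (β / (b - a)) * (Polynomial.X - Polynomial.C a) with hℓ
  set g : Polynomial ℝ := ℓ ^ 2 * ∏ j ∈ T, (Polynomial.X - Polynomial.C (θ j)) ^ 2 with hg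
  have hevalℓ : ∀ x : ℝ, ℓ.eval x = α * (b - x) / (b - a) + β * (x - a) / (b - a) := by
    intro x; simp [hℓ]; ring
  have hevalg : ∀ x : ℝ, g.eval x = (ℓ.eval x) ^ 2 * ∏ j ∈ T, (x - θ j) ^ 2 := by
    intro x; simp [hg, Polynomial.eval_prod]
  have hprodsq : ∀ x : ℝ, ∏ j ∈ T, (x - θ j) ^ 2 = (∏ j ∈ T, |x - θ j|) ^ 2 := by
    intro x
    rw [← Finset.prod_pow]
    exact Finset.prod_congr rfl fun j _ => (sq_abs _).symm
  -- endpoint values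
  have hgA : g.eval a = (W a) ^ n := by
    rw [hevalg, hevalℓ, hprodsq]
    rw [show α * (b - a) / (b - a) + β * (a - a) / (b - a) = α by field_simp; ring]
    rw [hα]
    field_simp
    rw [← pow_mul, mul_comm n 2, pow_mul, hA2]
    rw [hPP]; ring
  have hgB : g.eval b = (W b) ^ n := by
    rw [hevalg, hevalℓ, hprodsq]
    rw [show α * (b - b) / (b - a) + β * (b - a) / (b - a) = β by field_simp; ring]
    rw [hβ]
    field_simp
    rw [← pow_mul, mul_comm n 2, pow_mul, hB2]
    rw [hQQ]; ring
  refine ⟨g, ?_, ?_, ?_, ?_, ?_, ?_⟩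
  · -- degree
    calc g.natDegree ≤ (ℓ ^ 2).natDegree + (∏ j ∈ T, (Polynomial.X - Polynomial.C (θ j)) ^ 2).natDegree :=
          Polynomial.natDegree_mul_le
      _ ≤ 2 * 1 + 2 * (m - 2) := by
          gcongr
          · rw [Polynomial.natDegree_pow]
            have hd1 : (Polynomial.C b - Polynomial.X).natDegree ≤ 1 :=
              le_trans (Polynomial.natDegree_sub_le _ _) (by simp)
            have hd2 : (Polynomial.X - Polynomial.C a).natDegree ≤ 1 :=
              le_trans (Polynomial.natDegree_sub_le _ _) (by simp)
            have : ℓ.natDegree ≤ 1 := by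
              apply le_trans (Polynomial.natDegree_add_le _ _)
              simp only [max_le_iff]
              constructor
              · exact le_trans (Polynomial.natDegree_mul_le) (by simpa using hd1)
              · exact le_trans (Polynomial.natDegree_mul_le) (by simpa using hd2)
            omega
          · apply le_trans (Polynomial.natDegree_prod_le _ _)
            calc ∑ j ∈ T, ((Polynomial.X - Polynomial.C (θ j)) ^ 2).natDegree
                ≤ ∑ j ∈ T, 2 := by
                  apply Finset.sum_le_sum
                  intro j _
                  rw [Polynomial.natDegree_pow]
                  have := Polynomial.natDegree_X_sub_C (θ j)
                  omega
              _ = 2 * (m - 2) := by rw [Finset.sum_const, hTcard]; ring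
      _ ≤ 2 * m - 2 := by omega
  · rw [hgA]
    exact div_self (pow_ne_zero _ (hW a).ne')
  · rw [hgB]
    exact div_self (pow_ne_zero _ (hW b).ne')
  · intro j hj1 hj2
    have hjT : j ∈ T := (hTmem j).2 ⟨hj1, hj2⟩
    rw [hevalg]
    rw [Finset.prod_eq_zero hjT (by ring)]
    simp
  · -- main inequality on [a, b]
    intro x hax hxb
    have hWx : (0:ℝ) < W x := hW x
    show 1 ≤ Polynomial.eval x g / (W x) ^ n
    rw [one_le_div (pow_pos hWx n)]
    set t := (x - a) / (b - a) with ht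
    have ht0 : 0 ≤ t := by
      apply div_nonneg <;> linarith
    have ht1 : t ≤ 1 := by
      rw [div_le_one (by linarith)]; linarith
    have h1t : 1 - t = (b - x) / (b - a) := by
      rw [ht, eq_div_iff hba, sub_mul, div_mul_cancel₀ _ hba]; ring
    have hx : x = (1 - t) * a + t * b := by
      rw [h1t, ht, div_mul_eq_mul_div, div_mul_eq_mul_div, ← add_div, eq_div_iff hba]
      ring
    -- triangle inequality
    have htri : Real.sqrt (W x) ≤ (1 - t) * A + t * B := by
      have := my_sqrt_affine u v a b t ht0 ht1
      rw [← hx] at this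
      exact this
    -- node factors
    have hnode : ∀ j ∈ T, |x - θ j| = (1 - t) * |a - θ j| + t * |b - θ j| := by
      intro j hj
      obtain ⟨hjk, hjk₁⟩ := (hTmem j).1 hj
      rcases lt_trichotomy j k with h | h | h
      · have h1 : θ j < a := hθ h
        rw [abs_of_pos (by linarith), abs_of_pos (by linarith), abs_of_pos (by linarith)]
        rw [hx]; ring
      · exact absurd h hjk
      · have hj2 : k₁ < j := by
          rw [Fin.lt_def] at h ⊢
          simp only [hk₁]
          rcases Nat.lt_or_ge ((k : ℕ) + 1) (j : ℕ) with h' | h'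
          · exact h'
          · exfalso
            apply hjk₁
            apply Fin.ext
            show (j : ℕ) = (k : ℕ) + 1
            omega
        have h1 : b < θ j := hθ hj2
        rw [abs_of_neg (by linarith), abs_of_neg (by linarith), abs_of_neg (by linarith)]
        rw [hx]; ring
    -- Mahler
    set X' : Fin m → ℝ := fun j => if j = k then (1 - t) * α else (1 - t) * |a - θ j| with hX'
    set Y' : Fin m → ℝ := fun j => if j = k then t * β else t * |b - θ j| with hY'
    have h1t0 : 0 ≤ 1 - t := by linarith
    have hαPP : α * PP = A ^ (m - 1) := by
      rw [hα, div_mul_cancel₀ _ hPPpos.ne', hn]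
    have hβQQ : β * QQ = B ^ (m - 1) := by
      rw [hβ, div_mul_cancel₀ _ hQQpos.ne', hn]
    have hXprod : ∏ j ∈ s', X' j = ((1 - t) * A) ^ s'.card := by
      rw [← Finset.mul_prod_erase s' X' hks', ← hT, hs'card]
      have hT1 : ∏ j ∈ T, X' j = (1 - t) ^ (m - 2) * PP := by
        calc ∏ j ∈ T, X' j = ∏ j ∈ T, ((1 - t) * |a - θ j|) :=
              Finset.prod_congr rfl (fun j hj => by
                simp only [hX', if_neg ((hTmem j).1 hj).1])
          _ = (∏ _j ∈ T, (1 - t)) * ∏ j ∈ T, |a - θ j| := Finset.prod_mul_distrib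
          _ = (1 - t) ^ (m - 2) * PP := by rw [Finset.prod_const, hTcard, hPP]
      have hXk : X' k = (1 - t) * α := by simp only [hX', if_pos rfl]
      have hpow : (1 - t) ^ (m - 2) * (1 - t) = (1 - t) ^ (m - 1) := by
        rw [← pow_succ]; congr 1; omega
      calc X' k * ∏ j ∈ T, X' j = ((1 - t) ^ (m - 2) * (1 - t)) * (α * PP) := by
            rw [hT1, hXk]; ring
        _ = (1 - t) ^ (m - 1) * A ^ (m - 1) := by rw [hpow, hαPP]
        _ = ((1 - t) * A) ^ (m - 1) := (mul_pow _ _ _).symm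
    have hYprod : ∏ j ∈ s', Y' j = (t * B) ^ s'.card := by
      rw [← Finset.mul_prod_erase s' Y' hks', ← hT, hs'card]
      have hT1 : ∏ j ∈ T, Y' j = t ^ (m - 2) * QQ := by
        calc ∏ j ∈ T, Y' j = ∏ j ∈ T, (t * |b - θ j|) :=
              Finset.prod_congr rfl (fun j hj => by
                simp only [hY', if_neg ((hTmem j).1 hj).1])
          _ = (∏ _j ∈ T, t) * ∏ j ∈ T, |b - θ j| := Finset.prod_mul_distrib
          _ = t ^ (m - 2) * QQ := by rw [Finset.prod_const, hTcard, hQQ]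
      have hYk : Y' k = t * β := by simp only [hY', if_pos rfl]
      have hpow : t ^ (m - 2) * t = t ^ (m - 1) := by
        rw [← pow_succ]; congr 1; omega
      calc Y' k * ∏ j ∈ T, Y' j = (t ^ (m - 2) * t) * (β * QQ) := by
            rw [hT1, hYk]; ring
        _ = t ^ (m - 1) * B ^ (m - 1) := by rw [hpow, hβQQ]
        _ = (t * B) ^ (m - 1) := (mul_pow _ _ _).symm
    have hXnn : ∀ j ∈ s', 0 ≤ X' j := by
      intro j _
      simp only [hX']
      split_ifs
      exacts [mul_nonneg h1t0 hαpos.le, mul_nonneg h1t0 (abs_nonneg _)]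
    have hYnn : ∀ j ∈ s', 0 ≤ Y' j := by
      intro j _
      simp only [hY']
      split_ifs
      exacts [mul_nonneg ht0 hβpos.le, mul_nonneg ht0 (abs_nonneg _)]
    have hmahler := my_mahler s' ⟨k, hks'⟩ X' Y' hXnn hYnn
      (mul_nonneg h1t0 hApos.le) (mul_nonneg ht0 hBpos.le) hXprod hYprod
    have hsplit : ∏ j ∈ s', (X' j + Y' j)
        = (ℓ.eval x) * ∏ j ∈ T, |x - θ j| := by
      rw [← Finset.mul_prod_erase s' _ hks', ← hT]
      congr 1
      · simp only [hX', hY', if_pos rfl]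
        rw [hevalℓ, h1t, ht]; ring
      · apply Finset.prod_congr rfl
        intro j hj
        simp only [hX', hY', if_neg ((hTmem j).1 hj).1]
        rw [hnode j hj]
    rw [hsplit] at hmahler
    have hℓx : 0 ≤ ℓ.eval x := by
      rw [hevalℓ]
      have h1 : 0 ≤ α * (b - x) / (b - a) :=
        div_nonneg (mul_nonneg hαpos.le (by linarith)) (by linarith)
      have h2 : 0 ≤ β * (x - a) / (b - a) :=
        div_nonneg (mul_nonneg hβpos.le (by linarith)) (by linarith)
      linarith
    have hchain : Real.sqrt (W x) ^ s'.card ≤ (ℓ.eval x) * ∏ j ∈ T, |x - θ j| := by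
      calc Real.sqrt (W x) ^ s'.card ≤ ((1 - t) * A + t * B) ^ s'.card :=
            pow_le_pow_left₀ (Real.sqrt_nonneg _) htri _
        _ ≤ _ := hmahler
    have hfinal : (W x) ^ n ≤ g.eval x := by
      have h1 : (W x) ^ n = (Real.sqrt (W x) ^ s'.card) ^ 2 := by
        rw [← pow_mul, mul_comm s'.card 2, pow_mul, Real.sq_sqrt (hW x).le, hs'card, hn]
      rw [h1, hevalg, hprodsq]
      calc (Real.sqrt (W x) ^ s'.card) ^ 2
          ≤ ((ℓ.eval x) * ∏ j ∈ T, |x - θ j|) ^ 2 :=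
            pow_le_pow_left₀ (by positivity) hchain 2
        _ = (ℓ.eval x) ^ 2 * (∏ j ∈ T, |x - θ j|) ^ 2 := by ring
    exact hfinal
  · intro x _
    apply div_nonneg _ (by positivity)
    rw [hevalg, hprodsq]
    positivity
end

section
/- Let λ_1 < ... < λ_n with positive weights |w_j|², and let θ_1 < ... < θ_m with weights |c_j|² satisfy ∑_j |w_j|² r(λ_j) = ∑_j |c_j|² r(θ_j) for all r = p/|q_{m−1}|² with deg p ≤ 2m−2, where q_{m−1}(λ) = (λ−s)^{m−1} for some s ∈ ℂ \ ℝ. Then μ_n([θ_k, θ_{k+1}]) ≤ |c_k|² + |c_{k+1}|² for k = 1,...,m−1, and μ_n((−∞, θ_1]) + μ_n([θ_m, ∞)) ≤ |c_1|² + |c_m|², where μ_n(R) = ∑_{j: λ_j ∈ R} |w_j|². -/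
open Polynomial


lemma core_lemma {ι : Type*} [DecidableEq ι] (M : ℕ) (al be : ℝ) (hbe : be ≠ 0)
    (T : Finset ι) (q r : ι → ℝ)
    (hcard : (T.filter fun i => q i ≠ 0).card ≤ M)
    {y1 y2 : ℝ} (h12 : y1 < y2)
    (hnz : ∀ i ∈ T, ∀ y ∈ Set.Icc y1 y2, q i * y + r i ≠ 0)
    {CC : ℝ} (hC : 0 < CC)
    (h1 : CC * ∏ i ∈ T, (q i * y1 + r i)^2 = ((y1 - al)^2 + be^2) ^ M)
    (h2 : CC * ∏ i ∈ T, (q i * y2 + r i)^2 = ((y2 - al)^2 + be^2) ^ M) :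
    ∀ y ∈ Set.Icc y1 y2, ((y - al)^2 + be^2) ^ M ≤ CC * ∏ i ∈ T, (q i * y + r i)^2 := by
  set w0 : ℝ → ℝ := fun y => (y - al)^2 + be^2 with hw0def
  have hw0pos : ∀ y, 0 < w0 y := fun y => by positivity
  set F : ℝ → ℝ := fun y => CC * ∏ i ∈ T, (q i * y + r i)^2 with hFdef
  have hFpos : ∀ y ∈ Set.Icc y1 y2, 0 < F y := by
    intro y hy
    exact mul_pos hC (Finset.prod_pos fun i hi => by
      have := hnz i hi y hy; positivity)
  set ψ : ℝ → ℝ := fun y =>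
    Real.log CC + (∑ i ∈ T, Real.log ((q i * y + r i)^2)) - M * Real.log (w0 y) with hψdef
  have hψF : ∀ y ∈ Set.Icc y1 y2, ψ y = Real.log (F y) - M * Real.log (w0 y) := by
    intro y hy
    have hlog : Real.log (F y) = Real.log CC + ∑ i ∈ T, Real.log ((q i * y + r i)^2) := by
      rw [hFdef]
      rw [Real.log_mul (ne_of_gt hC) (by
        exact ne_of_gt (Finset.prod_pos fun i hi => by have := hnz i hi y hy; positivity))]
      rw [Real.log_prod (fun i hi => by have := hnz i hi y hy; positivity)]
    simp only [hψdef, hlog]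
  -- derivative of ψ
  set Φ : ℝ → ℝ := fun y =>
    (∑ i ∈ T, w0 y * ((2 * (q i * y + r i)) * q i) / (q i * y + r i)^2)
      - M * (2 * (y - al)) with hΦdef
  have hψderiv : ∀ y ∈ Set.Icc y1 y2, HasDerivAt ψ (Φ y / w0 y) y := by
    intro y hy
    have hsum : HasDerivAt (fun y => ∑ i ∈ T, Real.log ((q i * y + r i)^2))
        (∑ i ∈ T, (2 * (q i * y + r i) * q i) / (q i * y + r i)^2) y := by
      apply HasDerivAt.fun_sum
      intro i hi
      have haff : HasDerivAt (fun y => q i * y + r i) (q i) y := by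
        simpa using ((hasDerivAt_id y).const_mul (q i)).add_const (r i)
      have hsq : HasDerivAt (fun y => (q i * y + r i)^2) (2 * (q i * y + r i) * q i) y := by
        simpa using haff.fun_pow 2
      have := hsq.log (pow_ne_zero 2 (hnz i hi y hy))
      simpa using this
    have hw0d : HasDerivAt w0 (2 * (y - al)) y := by
      have : HasDerivAt (fun y => (y - al)^2 + be^2) (2 * (y - al)) y := by
        simpa using (((hasDerivAt_id y).sub_const al).pow 2).add_const (be^2)
      exact this
    have hlogw : HasDerivAt (fun y => (M : ℝ) * Real.log (w0 y))
        ((M : ℝ) * (2 * (y - al) / w0 y)) y :=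
      (hw0d.log (ne_of_gt (hw0pos y))).const_mul (M : ℝ)
    have htot := (hsum.const_add (Real.log CC)).sub hlogw
    refine (show HasDerivAt ψ _ y from htot).congr_deriv ?_
    symm
    have hw0ne : w0 y ≠ 0 := ne_of_gt (hw0pos y)
    rw [hΦdef]
    rw [sub_div, Finset.sum_div]
    congr 1
    · apply Finset.sum_congr rfl
      intro i hi
      have hd : (q i * y + r i)^2 ≠ 0 := pow_ne_zero 2 (hnz i hi y hy)
      field_simp
    · rw [mul_div_assoc]
  -- Φ is antitone
  have hΦd : ∀ y ∈ Set.Icc y1 y2, HasDerivAt Φ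
      ((∑ i ∈ T, (2 * (q i * y + r i)^2 - 2 * ((r i + q i * al)^2 + (q i)^2 * be^2))
          / (q i * y + r i)^2) - (M:ℝ) * 2) y := by
    intro y hy
    have hsum : HasDerivAt (fun y => ∑ i ∈ T, w0 y * ((2 * (q i * y + r i)) * q i) / (q i * y + r i)^2)
        (∑ i ∈ T, (2 * (q i * y + r i)^2 - 2 * ((r i + q i * al)^2 + (q i)^2 * be^2))
          / (q i * y + r i)^2) y := by
      apply HasDerivAt.fun_sum
      intro i hi
      have hne : q i * y + r i ≠ 0 := hnz i hi y hy
      have haff : HasDerivAt (fun y => q i * y + r i) (q i) y := by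
        simpa using ((hasDerivAt_id y).const_mul (q i)).add_const (r i)
      have hw0d : HasDerivAt w0 (2 * (y - al)) y := by
        have : HasDerivAt (fun y => (y - al)^2 + be^2) (2 * (y - al)) y := by
          simpa using (((hasDerivAt_id y).sub_const al).pow 2).add_const (be^2)
        exact this
      have hnum : HasDerivAt (fun y => w0 y * ((2 * (q i * y + r i)) * q i))
          (2 * (y - al) * ((2 * (q i * y + r i)) * q i) + w0 y * (2 * q i * q i)) y := by
        have h2 : HasDerivAt (fun y => (2 * (q i * y + r i)) * q i) (2 * q i * q i) y := by
          simpa [mul_comm, mul_assoc, mul_left_comm] using (haff.const_mul 2).mul_const (q i)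
        simpa using hw0d.fun_mul h2
      have hden : HasDerivAt (fun y => (q i * y + r i)^2) (2 * (q i * y + r i) * q i) y := by
        simpa using haff.fun_pow 2
      have hdiv := hnum.div hden (pow_ne_zero 2 hne)
      refine hdiv.congr_deriv ?_
      symm
      rw [hw0def]
      field_simp
      ring
    have hlin : HasDerivAt (fun y => (M : ℝ) * (2 * (y - al))) ((M:ℝ) * 2) y := by
      simpa [mul_comm, mul_assoc] using (((hasDerivAt_id y).sub_const al).const_mul 2).const_mul (M:ℝ)
    exact hsum.sub hlin
  have hΦd_nonpos : ∀ y ∈ Set.Icc y1 y2,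
      ((∑ i ∈ T, (2 * (q i * y + r i)^2 - 2 * ((r i + q i * al)^2 + (q i)^2 * be^2))
          / (q i * y + r i)^2) - (M:ℝ) * 2) ≤ 0 := by
    intro y hy
    have hterm : ∀ i ∈ T,
        (2 * (q i * y + r i)^2 - 2 * ((r i + q i * al)^2 + (q i)^2 * be^2)) / (q i * y + r i)^2
          ≤ if q i ≠ 0 then 2 else 0 := by
      intro i hi
      have hne : q i * y + r i ≠ 0 := hnz i hi y hy
      by_cases hq : q i = 0
      · have hr : r i ≠ 0 := by simpa [hq] using hne
        simp only [hq]
        have hzero : 2 * ((0:ℝ) * y + r i)^2 - 2 * ((r i + 0 * al)^2 + (0:ℝ)^2 * be^2) = 0 := by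
          ring
        rw [hzero, zero_div]
        simp
      · simp only [if_pos hq]
        rw [div_le_iff₀ (by positivity)]
        nlinarith [sq_nonneg (r i + q i * al), sq_nonneg (q i * be), sq_nonneg (q i * y + r i)]
    have hsumle := Finset.sum_le_sum hterm
    have hcount : (∑ i ∈ T, if q i ≠ 0 then (2:ℝ) else 0)
        = 2 * ((T.filter fun i => q i ≠ 0).card : ℝ) := by
      rw [Finset.sum_ite, Finset.sum_const, Finset.sum_const]
      simp [mul_comm]
    have hcR : ((T.filter fun i => q i ≠ 0).card : ℝ) ≤ (M : ℝ) := by exact_mod_cast hcard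
    rw [hcount] at hsumle
    linarith
  have hΦanti : AntitoneOn Φ (Set.Icc y1 y2) := by
    apply antitoneOn_of_deriv_nonpos (convex_Icc y1 y2)
    · intro y hy; exact (hΦd y hy).continuousAt.continuousWithinAt
    · intro y hy
      rw [interior_Icc] at hy
      exact ((hΦd y (Set.Ioo_subset_Icc_self hy)).differentiableAt).differentiableWithinAt
    · intro y hy
      rw [interior_Icc] at hy
      rw [(hΦd y (Set.Ioo_subset_Icc_self hy)).deriv]
      exact hΦd_nonpos y (Set.Ioo_subset_Icc_self hy)
  -- endpoints of ψ vanish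
  have hy1m : y1 ∈ Set.Icc y1 y2 := Set.left_mem_Icc.mpr h12.le
  have hy2m : y2 ∈ Set.Icc y1 y2 := Set.right_mem_Icc.mpr h12.le
  have hψ1 : ψ y1 = 0 := by
    rw [hψF y1 hy1m]
    have : F y1 = w0 y1 ^ M := h1
    rw [this, Real.log_pow]
    ring
  have hψ2 : ψ y2 = 0 := by
    rw [hψF y2 hy2m]
    have : F y2 = w0 y2 ^ M := h2
    rw [this, Real.log_pow]
    ring
  -- main claim via MVT
  have hψnonneg : ∀ y ∈ Set.Icc y1 y2, 0 ≤ ψ y := by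
    intro y hy
    by_contra hcon
    push_neg at hcon
    have hyne1 : y ≠ y1 := fun h => by rw [h, hψ1] at hcon; linarith
    have hyne2 : y ≠ y2 := fun h => by rw [h, hψ2] at hcon; linarith
    have hy1y : y1 < y := lt_of_le_of_ne hy.1 (Ne.symm hyne1)
    have hyy2 : y < y2 := lt_of_le_of_ne hy.2 hyne2
    have hsub1 : Set.Icc y1 y ⊆ Set.Icc y1 y2 := Set.Icc_subset_Icc le_rfl hy.2
    have hsub2 : Set.Icc y y2 ⊆ Set.Icc y1 y2 := Set.Icc_subset_Icc hy.1 le_rfl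
    obtain ⟨ξ1, hξ1mem, hξ1⟩ := exists_deriv_eq_slope ψ hy1y
      (fun z hz => (hψderiv z (hsub1 hz)).continuousAt.continuousWithinAt)
      (fun z hz => ((hψderiv z (hsub1 (Set.Ioo_subset_Icc_self hz))).differentiableAt).differentiableWithinAt)
    obtain ⟨ξ2, hξ2mem, hξ2⟩ := exists_deriv_eq_slope ψ hyy2
      (fun z hz => (hψderiv z (hsub2 hz)).continuousAt.continuousWithinAt)
      (fun z hz => ((hψderiv z (hsub2 (Set.Ioo_subset_Icc_self hz))).differentiableAt).differentiableWithinAt)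
    have hξ1mem' : ξ1 ∈ Set.Icc y1 y2 := hsub1 (Set.Ioo_subset_Icc_self hξ1mem)
    have hξ2mem' : ξ2 ∈ Set.Icc y1 y2 := hsub2 (Set.Ioo_subset_Icc_self hξ2mem)
    rw [(hψderiv ξ1 hξ1mem').deriv] at hξ1
    rw [(hψderiv ξ2 hξ2mem').deriv] at hξ2
    have hslope1 : Φ ξ1 / w0 ξ1 < 0 := by
      rw [hξ1, hψ1]
      apply div_neg_of_neg_of_pos _ (by linarith [hy1y])
      linarith
    have hslope2 : 0 < Φ ξ2 / w0 ξ2 := by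
      rw [hξ2, hψ2]
      apply div_pos _ (by linarith [hyy2])
      linarith
    have hΦ1neg : Φ ξ1 < 0 := by
      by_contra hcc
      push_neg at hcc
      exact absurd (div_nonneg hcc (hw0pos ξ1).le) (not_le.mpr hslope1)
    have hΦ2pos : 0 < Φ ξ2 := by
      by_contra hcc
      push_neg at hcc
      have : Φ ξ2 / w0 ξ2 ≤ 0 := div_nonpos_of_nonpos_of_nonneg hcc (hw0pos ξ2).le
      linarith
    have hle : ξ1 ≤ ξ2 := le_trans hξ1mem.2.le hξ2mem.1.le
    have := hΦanti hξ1mem' hξ2mem' hle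
    linarith
  -- conclude
  intro y hy
  have h0 := hψnonneg y hy
  rw [hψF y hy] at h0
  have hlog : (M:ℝ) * Real.log (w0 y) ≤ Real.log (F y) := by linarith
  rw [← Real.log_pow] at hlog
  exact (Real.log_le_log_iff (pow_pos (hw0pos y) M) (hFpos y hy)).mp hlog

lemma quad_key {n m : ℕ} (lam : Fin n → ℝ) (w : Fin n → ℂ) (θ : Fin m → ℝ) (c : Fin m → ℂ)
    (s : ℂ) (hs : s.im ≠ 0)
    (hquad : ∀ p : Polynomial ℝ, p.natDegree ≤ 2 * m - 2 →
      ∑ j, ‖w j‖ ^ 2 * (p.eval (lam j) / ((lam j - s.re) ^ 2 + s.im ^ 2) ^ (m - 1))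
        = ∑ j, ‖c j‖ ^ 2 * (p.eval (θ j) / ((θ j - s.re) ^ 2 + s.im ^ 2) ^ (m - 1)))
    (k1 k2 : Fin m) (hk12 : k1 ≠ k2)
    (P : Polynomial ℝ) (hdeg : P.natDegree ≤ 2 * m - 2)
    (hzero : ∀ j, j ≠ k1 → j ≠ k2 → P.eval (θ j) = 0)
    (hP1 : P.eval (θ k1) = ((θ k1 - s.re) ^ 2 + s.im ^ 2) ^ (m - 1))
    (hP2 : P.eval (θ k2) = ((θ k2 - s.re) ^ 2 + s.im ^ 2) ^ (m - 1))
    (hPnn : ∀ x : ℝ, 0 ≤ P.eval x)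
    (Sset : Finset (Fin n))
    (hS : ∀ j ∈ Sset, ((lam j - s.re) ^ 2 + s.im ^ 2) ^ (m - 1) ≤ P.eval (lam j)) :
    ∑ j ∈ Sset, ‖w j‖ ^ 2 ≤ ‖c k1‖ ^ 2 + ‖c k2‖ ^ 2 := by
  have hD : ∀ x : ℝ, 0 < ((x - s.re) ^ 2 + s.im ^ 2) ^ (m - 1) := by
    intro x; positivity
  have hq := hquad P hdeg
  -- compute the RHS
  have hRHS : ∑ j, ‖c j‖ ^ 2 * (P.eval (θ j) / ((θ j - s.re) ^ 2 + s.im ^ 2) ^ (m - 1))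
      = ‖c k1‖ ^ 2 + ‖c k2‖ ^ 2 := by
    rw [← Finset.sum_subset (Finset.subset_univ ({k1, k2} : Finset (Fin m)))
      (fun j _ hj => by
        simp only [Finset.mem_insert, Finset.mem_singleton] at hj
        push_neg at hj
        rw [hzero j hj.1 hj.2]
        simp)]
    rw [Finset.sum_pair hk12, hP1, hP2, div_self (ne_of_gt (hD _)), div_self (ne_of_gt (hD _))]
    ring
  -- lower bound the LHS
  have hLHS1 : ∑ j ∈ Sset, ‖w j‖ ^ 2
      ≤ ∑ j ∈ Sset, ‖w j‖ ^ 2 * (P.eval (lam j) / ((lam j - s.re) ^ 2 + s.im ^ 2) ^ (m - 1)) := by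
    apply Finset.sum_le_sum
    intro j hj
    have h1 : (1:ℝ) ≤ P.eval (lam j) / ((lam j - s.re) ^ 2 + s.im ^ 2) ^ (m - 1) :=
      (one_le_div (hD _)).mpr (hS j hj)
    nlinarith [sq_nonneg ‖w j‖]
  have hLHS2 : ∑ j ∈ Sset, ‖w j‖ ^ 2 * (P.eval (lam j) / ((lam j - s.re) ^ 2 + s.im ^ 2) ^ (m - 1))
      ≤ ∑ j, ‖w j‖ ^ 2 * (P.eval (lam j) / ((lam j - s.re) ^ 2 + s.im ^ 2) ^ (m - 1)) := by
    apply Finset.sum_le_sum_of_subset_of_nonneg (Finset.subset_univ _)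
    intro j _ _
    exact mul_nonneg (by positivity) (div_nonneg (hPnn _) (hD _).le)
  linarith [hq, hRHS ▸ hq]

lemma middle_poly {m : ℕ} (θ : Fin m → ℝ) (hθ : StrictMono θ) (a b : ℝ) (hb : b ≠ 0)
    (k k' : Fin m) (hkv : (k' : ℕ) = (k : ℕ) + 1) :
    ∃ P : Polynomial ℝ, P.natDegree ≤ 2 * m - 2 ∧
      (∀ j, j ≠ k → j ≠ k' → P.eval (θ j) = 0) ∧
      P.eval (θ k) = ((θ k - a) ^ 2 + b ^ 2) ^ (m - 1) ∧
      P.eval (θ k') = ((θ k' - a) ^ 2 + b ^ 2) ^ (m - 1) ∧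
      (∀ x : ℝ, 0 ≤ P.eval x) ∧
      (∀ x : ℝ, θ k ≤ x → x ≤ θ k' → ((x - a) ^ 2 + b ^ 2) ^ (m - 1) ≤ P.eval x) := by
  have hm2 : 2 ≤ m := by omega
  have hkk' : k < k' := by rw [Fin.lt_def]; omega
  have hne : k ≠ k' := ne_of_lt hkk'
  have he12 : θ k < θ k' := hθ hkk'
  set e1 := θ k with he1
  set e2 := θ k' with he2
  set J : Finset (Fin m) := (Finset.univ.erase k).erase k' with hJ
  have hJmem : ∀ j, j ∈ J ↔ j ≠ k' ∧ j ≠ k := by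
    intro j; simp [hJ, Finset.mem_erase]
  have hJcard : J.card = m - 2 := by
    rw [hJ, Finset.card_erase_of_mem, Finset.card_erase_of_mem (Finset.mem_univ k)]
    · simp; omega
    · exact Finset.mem_erase.mpr ⟨hne.symm, Finset.mem_univ _⟩
  have hJout : ∀ j ∈ J, θ j < e1 ∨ e2 < θ j := by
    intro j hj
    rw [hJmem] at hj
    have h1 : (j : ℕ) ≠ (k' : ℕ) := fun h => hj.1 (Fin.ext h)
    have h2 : (j : ℕ) ≠ (k : ℕ) := fun h => hj.2 (Fin.ext h)
    rcases lt_or_gt_of_ne h2 with h | h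
    · exact Or.inl (hθ (by rwa [Fin.lt_def]))
    · right
      apply hθ
      rw [Fin.lt_def]
      omega
  have hfac_ne : ∀ j ∈ J, ∀ x ∈ Set.Icc e1 e2, x - θ j ≠ 0 := by
    intro j hj x hx
    rcases hJout j hj with h | h
    · have : θ j < x := lt_of_lt_of_le h hx.1
      linarith
    · have : x < θ j := lt_of_le_of_lt hx.2 h
      linarith
  set Q1 : ℝ := ∏ j ∈ J, (e1 - θ j) with hQ1def
  set Q2 : ℝ := ∏ j ∈ J, (e2 - θ j) with hQ2def
  have hQ1 : Q1 ≠ 0 := Finset.prod_ne_zero_iff.mpr fun j hj =>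
    hfac_ne j hj e1 (Set.left_mem_Icc.mpr he12.le)
  have hQ2 : Q2 ≠ 0 := Finset.prod_ne_zero_iff.mpr fun j hj =>
    hfac_ne j hj e2 (Set.right_mem_Icc.mpr he12.le)
  set D : ℝ → ℝ := fun x => ((x - a) ^ 2 + b ^ 2) ^ (m - 1) with hD
  have hDpos : ∀ x, 0 < D x := fun x => by positivity
  set u1 : ℝ := D e1 / Q1 ^ 2 with hu1def
  set u2 : ℝ := D e2 / Q2 ^ 2 with hu2def
  have hu1 : 0 < u1 := div_pos (hDpos e1) (pow_two_pos_of_ne_zero hQ1)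
  have hu2 : 0 < u2 := div_pos (hDpos e2) (pow_two_pos_of_ne_zero hQ2)
  set t1 : ℝ := Real.sqrt u1 with ht1def
  set t2 : ℝ := Real.sqrt u2 with ht2def
  have ht1 : 0 < t1 := Real.sqrt_pos.mpr hu1
  have ht2 : 0 < t2 := Real.sqrt_pos.mpr hu2
  have ht1sq : t1 ^ 2 = u1 := Real.sq_sqrt hu1.le
  have ht2sq : t2 ^ 2 = u2 := Real.sq_sqrt hu2.le
  set qL : ℝ := (t2 - t1) / (e2 - e1) with hqLdef
  set rL : ℝ := t1 - qL * e1 with hrLdef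
  have hLe1 : qL * e1 + rL = t1 := by rw [hrLdef]; ring
  have hΔ : e2 - e1 ≠ 0 := ne_of_gt (show (0:ℝ) < e2 - e1 by linarith)
  have hLe2 : qL * e2 + rL = t2 := by
    rw [hrLdef, hqLdef]
    field_simp
    ring
  have haffpos : ∀ y ∈ Set.Icc e1 e2, 0 < qL * y + rL := by
    intro y hy
    have hform : qL * y + rL = ((e2 - y) * t1 + (y - e1) * t2) / (e2 - e1) := by
      rw [hrLdef, hqLdef]
      field_simp
      ring
    rw [hform]
    apply div_pos _ (by linarith)
    rcases eq_or_lt_of_le hy.1 with h | h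
    · rw [← h]
      have : (0:ℝ) < (e2 - e1) * t1 := mul_pos (by linarith) ht1
      nlinarith
    · have h1 : 0 < (y - e1) * t2 := mul_pos (by linarith) ht2
      have h2 : 0 ≤ (e2 - y) * t1 := mul_nonneg (by linarith [hy.2]) ht1.le
      linarith
  -- the polynomial
  set P : Polynomial ℝ := ((C qL * X + C rL) * ∏ j ∈ J, (X - C (θ j))) ^ 2 with hP
  have hPeval : ∀ x : ℝ, P.eval x = ((qL * x + rL) * ∏ j ∈ J, (x - θ j)) ^ 2 := by
    intro x
    simp [hP, eval_prod]
  refine ⟨P, ?_, ?_, ?_, ?_, ?_, ?_⟩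
  · -- degree
    rw [hP, natDegree_pow]
    have h1 : (C qL * X + C rL).natDegree ≤ 1 := natDegree_linear_le
    have h2 : (∏ j ∈ J, (X - C (θ j))).natDegree ≤ m - 2 := by
      refine le_trans (natDegree_prod_le _ _) ?_
      have : ∀ j ∈ J, (X - C (θ j)).natDegree = 1 := fun j _ => natDegree_X_sub_C _
      rw [Finset.sum_congr rfl this, Finset.sum_const, smul_eq_mul, mul_one, hJcard]
    have h3 := natDegree_mul_le (p := C qL * X + C rL) (q := ∏ j ∈ J, (X - C (θ j)))
    omega
  · -- zeros
    intro j hj1 hj2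
    have hjJ : j ∈ J := (hJmem j).mpr ⟨hj2, hj1⟩
    rw [hPeval]
    rw [Finset.prod_eq_zero hjJ (by ring)]
    ring
  · -- value at e1
    rw [hPeval, show qL * e1 + rL = t1 from hLe1, mul_pow, ht1sq, hu1def, hD]
    rw [div_mul_cancel₀ _ (pow_ne_zero 2 hQ1)]
  · -- value at e2
    rw [hPeval, show qL * e2 + rL = t2 from hLe2, mul_pow, ht2sq, hu2def, hD]
    rw [div_mul_cancel₀ _ (pow_ne_zero 2 hQ2)]
  · intro x
    rw [hPeval]; positivity
  · -- majorization
    intro x hx1 hx2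
    classical
    set T : Finset (Option (Fin m)) := insert none (J.image some) with hT
    set qf : Option (Fin m) → ℝ := fun o => o.elim qL (fun _ => 1) with hqf
    set rf : Option (Fin m) → ℝ := fun o => o.elim rL (fun j => -θ j) with hrf
    have hnonemem : none ∉ J.image some := by simp
    have hprod : ∀ y : ℝ, ∏ i ∈ T, (qf i * y + rf i) ^ 2
        = (qL * y + rL) ^ 2 * ∏ j ∈ J, (y - θ j) ^ 2 := by
      intro y
      rw [hT, Finset.prod_insert hnonemem,
        Finset.prod_image (fun x _ y _ h => Option.some_injective _ h)]
      simp only [hqf, hrf, Option.elim]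
      congr 1
      apply Finset.prod_congr rfl
      intro j _
      ring
    have hcard : (T.filter fun i => qf i ≠ 0).card ≤ m - 1 := by
      refine le_trans (Finset.card_filter_le _ _) ?_
      rw [hT, Finset.card_insert_of_notMem hnonemem,
        Finset.card_image_of_injective _ (Option.some_injective _), hJcard]
      omega
    have hnz : ∀ i ∈ T, ∀ y ∈ Set.Icc e1 e2, qf i * y + rf i ≠ 0 := by
      intro i hi y hy
      rw [hT, Finset.mem_insert] at hi
      rcases hi with h | h
      · rw [h]
        simp only [hqf, hrf, Option.elim]
        exact ne_of_gt (haffpos y hy)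
      · obtain ⟨j, hjJ, rfl⟩ := Finset.mem_image.mp h
        simp only [hqf, hrf, Option.elim]
        have := hfac_ne j hjJ y hy
        intro hcon
        apply this
        linarith [hcon]
    have hsq : ∀ y : ℝ, ∏ j ∈ J, (y - θ j) ^ 2 = (∏ j ∈ J, (y - θ j)) ^ 2 :=
      fun y => Finset.prod_pow _ _ _
    have h1core : (1:ℝ) * ∏ i ∈ T, (qf i * e1 + rf i) ^ 2 = ((e1 - a) ^ 2 + b ^ 2) ^ (m - 1) := by
      rw [one_mul, hprod, show qL * e1 + rL = t1 from hLe1, hsq, ← hQ1def, ht1sq, hu1def]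
      rw [div_mul_cancel₀ _ (pow_ne_zero 2 hQ1), hD]
    have h2core : (1:ℝ) * ∏ i ∈ T, (qf i * e2 + rf i) ^ 2 = ((e2 - a) ^ 2 + b ^ 2) ^ (m - 1) := by
      rw [one_mul, hprod, show qL * e2 + rL = t2 from hLe2, hsq, ← hQ2def, ht2sq, hu2def]
      rw [div_mul_cancel₀ _ (pow_ne_zero 2 hQ2), hD]
    have hcore := core_lemma (m - 1) a b hb T qf rf hcard he12 hnz one_pos h1core h2core
      x ⟨hx1, hx2⟩
    rw [one_mul, hprod, hsq, ← mul_pow, ← hPeval] at hcore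
    exact hcore

lemma recip_le_recip_neg {aa bb : ℝ} (h : aa ≤ bb) (hbb : bb < 0) : 1/bb ≤ 1/aa := by
  have haa : aa < 0 := lt_of_le_of_lt h hbb
  have hK : 0 < aa * bb := mul_pos_of_neg_of_neg haa hbb
  have hdiff : 1/aa - 1/bb = (bb - aa)/(aa*bb) := by
    field_simp [ne_of_lt haa, ne_of_lt hbb]
  have hnn : 0 ≤ (bb - aa)/(aa*bb) := div_nonneg (by linarith) hK.le
  linarith

lemma recip_lt_recip_neg {aa bb : ℝ} (h : aa < bb) (hbb : bb < 0) : 1/bb < 1/aa := by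
  have haa : aa < 0 := lt_trans h hbb
  have hK : 0 < aa * bb := mul_pos_of_neg_of_neg haa hbb
  have hdiff : 1/aa - 1/bb = (bb - aa)/(aa*bb) := by
    field_simp [ne_of_lt haa, ne_of_lt hbb]
  have hpos : 0 < (bb - aa)/(aa*bb) := div_pos (by linarith) hK
  linarith

set_option maxHeartbeats 1000000 in
lemma outer_poly {m : ℕ} (hm2 : 2 ≤ m) (θ : Fin m → ℝ) (hθ : StrictMono θ) (a b : ℝ) (hb : b ≠ 0)
    (i0 im : Fin m) (h0v : (i0 : ℕ) = 0) (himv : (im : ℕ) = m - 1) :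
    ∃ P : Polynomial ℝ, P.natDegree ≤ 2 * m - 2 ∧
      (∀ j, j ≠ i0 → j ≠ im → P.eval (θ j) = 0) ∧
      P.eval (θ i0) = ((θ i0 - a) ^ 2 + b ^ 2) ^ (m - 1) ∧
      P.eval (θ im) = ((θ im - a) ^ 2 + b ^ 2) ^ (m - 1) ∧
      (∀ x : ℝ, 0 ≤ P.eval x) ∧
      (∀ x : ℝ, x ≤ θ i0 ∨ θ im ≤ x → ((x - a) ^ 2 + b ^ 2) ^ (m - 1) ≤ P.eval x) := by
  have hkk' : i0 < im := by rw [Fin.lt_def]; omega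
  have hne : i0 ≠ im := ne_of_lt hkk'
  have he12 : θ i0 < θ im := hθ hkk'
  set e1 := θ i0 with he1
  set e2 := θ im with he2
  set J : Finset (Fin m) := (Finset.univ.erase i0).erase im with hJ
  have hJmem : ∀ j, j ∈ J ↔ j ≠ im ∧ j ≠ i0 := by
    intro j; simp [hJ, Finset.mem_erase]
  have hJcard : J.card = m - 2 := by
    rw [hJ, Finset.card_erase_of_mem, Finset.card_erase_of_mem (Finset.mem_univ i0)]
    · simp; omega
    · exact Finset.mem_erase.mpr ⟨hne.symm, Finset.mem_univ _⟩
  have hJin : ∀ j ∈ J, e1 < θ j ∧ θ j < e2 := by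
    intro j hj
    rw [hJmem] at hj
    have h1 : (j : ℕ) ≠ (im : ℕ) := fun h => hj.1 (Fin.ext h)
    have h2 : (j : ℕ) ≠ (i0 : ℕ) := fun h => hj.2 (Fin.ext h)
    constructor
    · exact hθ (by rw [Fin.lt_def]; omega)
    · exact hθ (by rw [Fin.lt_def]; omega)
  set Q1 : ℝ := ∏ j ∈ J, (e1 - θ j) with hQ1def
  set Q2 : ℝ := ∏ j ∈ J, (e2 - θ j) with hQ2def
  have hQ1 : Q1 ≠ 0 := Finset.prod_ne_zero_iff.mpr fun j hj => by
    have := (hJin j hj).1; intro hc; linarith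
  have hQ2 : Q2 ≠ 0 := Finset.prod_ne_zero_iff.mpr fun j hj => by
    have := (hJin j hj).2; intro hc; linarith
  set D : ℝ → ℝ := fun x => ((x - a) ^ 2 + b ^ 2) ^ (m - 1) with hD
  have hDpos : ∀ x, 0 < D x := fun x => by positivity
  set u1 : ℝ := D e1 / Q1 ^ 2 with hu1def
  set u2 : ℝ := D e2 / Q2 ^ 2 with hu2def
  have hu1 : 0 < u1 := div_pos (hDpos e1) (pow_two_pos_of_ne_zero hQ1)
  have hu2 : 0 < u2 := div_pos (hDpos e2) (pow_two_pos_of_ne_zero hQ2)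
  set t1 : ℝ := Real.sqrt u1 with ht1def
  set t2 : ℝ := Real.sqrt u2 with ht2def
  have ht1 : 0 < t1 := Real.sqrt_pos.mpr hu1
  have ht2 : 0 < t2 := Real.sqrt_pos.mpr hu2
  have ht1sq : t1 ^ 2 = u1 := Real.sq_sqrt hu1.le
  have ht2sq : t2 ^ 2 = u2 := Real.sq_sqrt hu2.le
  have hΔ : e2 - e1 ≠ 0 := ne_of_gt (show (0:ℝ) < e2 - e1 by linarith)
  have ht12 : t1 + t2 ≠ 0 := ne_of_gt (by linarith)
  set aL : ℝ := (t1 + t2) / (e2 - e1) with haLdef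
  have haLpos : 0 < aL := div_pos (by linarith) (by linarith)
  set v : ℝ := (e1 * t2 + e2 * t1) / (t1 + t2) with hvdef
  have hv1 : e1 < v := by
    have hform : v - e1 = t1 * (e2 - e1) / (t1 + t2) := by
      rw [hvdef]; field_simp; ring
    have : 0 < v - e1 := by
      rw [hform]; exact div_pos (mul_pos ht1 (by linarith)) (by linarith)
    linarith
  have hv2 : v < e2 := by
    have hform : e2 - v = t2 * (e2 - e1) / (t1 + t2) := by
      rw [hvdef]; field_simp; ring
    have : 0 < e2 - v := by
      rw [hform]; exact div_pos (mul_pos ht2 (by linarith)) (by linarith)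
    linarith
  have haL1 : aL * (e1 - v) = -t1 := by
    rw [haLdef, hvdef]; field_simp; ring
  have haL2 : aL * (e2 - v) = t2 := by
    rw [haLdef, hvdef]; field_simp; ring
  set P : Polynomial ℝ := (C aL * (X - C v) * ∏ j ∈ J, (X - C (θ j))) ^ 2 with hP
  have hPeval : ∀ x : ℝ, P.eval x = (aL * (x - v) * ∏ j ∈ J, (x - θ j)) ^ 2 := by
    intro x; simp [hP, eval_prod]
  have hsq : ∀ y : ℝ, ∏ j ∈ J, (y - θ j) ^ 2 = (∏ j ∈ J, (y - θ j)) ^ 2 :=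
    fun y => Finset.prod_pow _ _ _
  have hPe1 : P.eval e1 = D e1 := by
    rw [hPeval, show aL * (e1 - v) * ∏ j ∈ J, (e1 - θ j) = -t1 * Q1 from by
      rw [haL1, ← hQ1def]]
    rw [mul_pow, neg_sq, ht1sq, hu1def, div_mul_cancel₀ _ (pow_ne_zero 2 hQ1)]
  have hPe2 : P.eval e2 = D e2 := by
    rw [hPeval, show aL * (e2 - v) * ∏ j ∈ J, (e2 - θ j) = t2 * Q2 from by
      rw [haL2, ← hQ2def]]
    rw [mul_pow, ht2sq, hu2def, div_mul_cancel₀ _ (pow_ne_zero 2 hQ2)]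
  refine ⟨P, ?_, ?_, hPe1, hPe2, ?_, ?_⟩
  · rw [hP, natDegree_pow]
    have h1 : (C aL * (X - C v)).natDegree ≤ 1 := by
      refine le_trans (natDegree_mul_le) ?_
      rw [natDegree_C, natDegree_X_sub_C]
    have h2 : (∏ j ∈ J, (X - C (θ j))).natDegree ≤ m - 2 := by
      refine le_trans (natDegree_prod_le _ _) ?_
      have : ∀ j ∈ J, (X - C (θ j)).natDegree = 1 := fun j _ => natDegree_X_sub_C _
      rw [Finset.sum_congr rfl this, Finset.sum_const, smul_eq_mul, mul_one, hJcard]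
    have h3 := natDegree_mul_le (p := C aL * (X - C v)) (q := ∏ j ∈ J, (X - C (θ j)))
    omega
  · intro j hj1 hj2
    have hjJ : j ∈ J := (hJmem j).mpr ⟨hj2, hj1⟩
    rw [hPeval, Finset.prod_eq_zero hjJ (by ring)]
    ring
  · intro x; rw [hPeval]; positivity
  · -- majorization on the outer region
    intro x hx
    set ρ : ℝ := (v - a) ^ 2 + b ^ 2 with hρdef
    have hρ : 0 < ρ := by positivity
    have hρne : ρ ≠ 0 := ne_of_gt hρ
    set alt : ℝ := -(v - a) / ρ with haltdef
    set bet : ℝ := b / ρ with hbetdef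
    have hbet : bet ≠ 0 := div_ne_zero hb hρne
    set y1 : ℝ := 1 / (e1 - v) with hy1def
    set y2 : ℝ := 1 / (e2 - v) with hy2def
    have hy1 : y1 < 0 := by rw [hy1def]; exact one_div_neg.mpr (by linarith)
    have hy2 : 0 < y2 := by rw [hy2def]; exact one_div_pos.mpr (by linarith)
    have h12 : y1 < y2 := lt_trans hy1 hy2
    have hexp : 2 * m - 2 = 2 * (m - 1) := by omega
    have hbase : ∀ y : ℝ, y ≠ 0 →
        y ^ 2 * ((v + 1/y - a) ^ 2 + b ^ 2) = ρ * ((y - alt) ^ 2 + bet ^ 2) := by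
      intro y hy
      rw [haltdef, hbetdef, hρdef]
      field_simp
      ring
    have hDs : ∀ y : ℝ, y ≠ 0 →
        y ^ (2 * m - 2) * ((v + 1/y - a) ^ 2 + b ^ 2) ^ (m - 1)
          = ρ ^ (m - 1) * ((y - alt) ^ 2 + bet ^ 2) ^ (m - 1) := by
      intro y hy
      rw [hexp, pow_mul, ← mul_pow, hbase y hy, mul_pow]
    have hfacid : ∀ y : ℝ, y ≠ 0 → ∀ j : Fin m, y * (v + 1/y - θ j) = (v - θ j) * y + 1 := by
      intro y hy j
      field_simp
      ring
    have hPs : ∀ y : ℝ, y ≠ 0 →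
        y ^ (2 * m - 2) * P.eval (v + 1/y) = aL ^ 2 * ∏ j ∈ J, ((v - θ j) * y + 1) ^ 2 := by
      intro y hy
      rw [hPeval, show v + 1/y - v = 1/y from by ring]
      have hexp2 : 2 * m - 2 = (m - 1) * 2 := by omega
      rw [hexp2, pow_mul, ← mul_pow]
      rw [show aL ^ 2 * ∏ j ∈ J, ((v - θ j) * y + 1) ^ 2
          = (aL * ∏ j ∈ J, ((v - θ j) * y + 1)) ^ 2 from by
        rw [mul_pow, Finset.prod_pow]]
      congr 1
      have hm1 : m - 1 = (m - 2) + 1 := by omega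
      rw [hm1, pow_succ]
      have hJy : (y : ℝ) ^ (m - 2) = ∏ _j ∈ J, y := by
        rw [Finset.prod_const, hJcard]
      have hstep : ∏ j ∈ J, (y * (v + 1/y - θ j)) = ∏ j ∈ J, ((v - θ j) * y + 1) :=
        Finset.prod_congr rfl fun j _ => hfacid y hy j
      calc y ^ (m - 2) * y * (aL * (1/y) * ∏ j ∈ J, (v + 1/y - θ j))
          = aL * (y * (1/y)) * ((∏ _j ∈ J, y) * ∏ j ∈ J, (v + 1/y - θ j)) := by
            rw [← hJy]; ring
        _ = aL * (y * (1/y)) * ∏ j ∈ J, (y * (v + 1/y - θ j)) := by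
            rw [← Finset.prod_mul_distrib]
        _ = aL * ∏ j ∈ J, ((v - θ j) * y + 1) := by
            rw [mul_one_div_cancel hy, hstep, mul_one]
    set CC : ℝ := aL ^ 2 / ρ ^ (m - 1) with hCCdef
    have hCC : 0 < CC := div_pos (pow_two_pos_of_ne_zero (ne_of_gt haLpos)) (pow_pos hρ _)
    have hcard : (J.filter fun j => (v - θ j) ≠ 0).card ≤ m - 1 := by
      refine le_trans (Finset.card_filter_le _ _) ?_
      rw [hJcard]; omega
    have hnz : ∀ j ∈ J, ∀ y ∈ Set.Icc y1 y2, (v - θ j) * y + 1 ≠ 0 := by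
      intro j hj y hy
      by_cases hvj : v - θ j = 0
      · rw [hvj, zero_mul, zero_add]; exact one_ne_zero
      · intro hcon
        have hjv : θ j - v ≠ 0 := fun h => hvj (by linarith)
        have h' : (θ j - v) * y = 1 := by linear_combination -hcon
        have hyval : y = 1 / (θ j - v) := by
          field_simp
          linarith [h']
        have hjin := hJin j hj
        rcases lt_or_gt_of_ne (fun h : θ j = v => hvj (by rw [h]; ring)) with hlt | hgt
        · -- θ j < v : y = 1/(θj−v) < 1/(e1−v) = y1
          have : 1 / (θ j - v) < 1 / (e1 - v) := recip_lt_recip_neg (by linarith [hjin.1]) (by linarith)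
          rw [← hy1def] at this
          rw [hyval] at hy
          linarith [hy.1]
        · -- v < θ j : y = 1/(θj−v) > 1/(e2−v) = y2
          have : 1 / (e2 - v) < 1 / (θ j - v) :=
            one_div_lt_one_div_of_lt (by linarith) (by linarith [hjin.2])
          rw [← hy2def] at this
          rw [hyval] at hy
          linarith [hy.2]
    have hy1ne : y1 ≠ 0 := ne_of_lt hy1
    have hy2ne : y2 ≠ 0 := ne_of_gt hy2
    have hinv1 : v + 1/y1 = e1 := by rw [hy1def, one_div_one_div]; ring
    have hinv2 : v + 1/y2 = e2 := by rw [hy2def, one_div_one_div]; ring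
    have hend : ∀ y : ℝ, y ≠ 0 → ∀ e : ℝ, v + 1/y = e → P.eval e = D e →
        CC * ∏ j ∈ J, ((v - θ j) * y + 1) ^ 2 = ((y - alt) ^ 2 + bet ^ 2) ^ (m - 1) := by
      intro y hy e hinv hPe
      have hDse := hDs y hy
      rw [hinv] at hDse
      have hPse := hPs y hy
      rw [hinv, hPe] at hPse
      have hDe : D e = ((e - a) ^ 2 + b ^ 2) ^ (m - 1) := by simp only [hD]
      rw [hDe] at hPse
      have hstep : CC * ∏ j ∈ J, ((v - θ j) * y + 1) ^ 2
          = (aL ^ 2 * ∏ j ∈ J, ((v - θ j) * y + 1) ^ 2) / ρ ^ (m - 1) := by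
        rw [hCCdef]; ring
      rw [hstep, ← hPse, hDse, mul_div_cancel_left₀ _ (pow_ne_zero _ hρne)]
    have h1core := hend y1 hy1ne e1 hinv1 hPe1
    have h2core := hend y2 hy2ne e2 hinv2 hPe2
    have hcore := core_lemma (m - 1) alt bet hbet J (fun j => v - θ j) (fun _ => 1)
      hcard h12 hnz hCC h1core h2core
    -- conclude for our x
    have hconc : ∀ y : ℝ, y ≠ 0 → y ∈ Set.Icc y1 y2 → v + 1/y = x →
        ((x - a) ^ 2 + b ^ 2) ^ (m - 1) ≤ P.eval x := by
      intro y hyne hymem hinv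
      have hc := hcore y hymem
      have hmul := mul_le_mul_of_nonneg_left hc (le_of_lt (pow_pos hρ (m - 1)))
      have hL : ρ ^ (m - 1) * ((y - alt) ^ 2 + bet ^ 2) ^ (m - 1)
          = y ^ (2 * m - 2) * ((x - a) ^ 2 + b ^ 2) ^ (m - 1) := by
        have := hDs y hyne
        rw [hinv] at this
        rw [← this]
      have hR : ρ ^ (m - 1) * (CC * ∏ j ∈ J, ((v - θ j) * y + 1) ^ 2)
          = y ^ (2 * m - 2) * P.eval x := by
        have hstep : ρ ^ (m - 1) * (CC * ∏ j ∈ J, ((v - θ j) * y + 1) ^ 2)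
            = aL ^ 2 * ∏ j ∈ J, ((v - θ j) * y + 1) ^ 2 := by
          rw [hCCdef]
          field_simp
          exact Finset.prod_congr rfl fun _ _ => by ring
        rw [hstep, ← hPs y hyne, hinv]
      rw [hL, hR] at hmul
      have hyp : 0 < y ^ (2 * m - 2) := by
        rw [hexp, pow_mul]
        exact pow_pos (by positivity) _
      exact le_of_mul_le_mul_left hmul hyp
    rcases hx with hx | hx
    · -- x ≤ e1
      have hxv : x - v < 0 := by linarith [hv1]
      set y : ℝ := 1 / (x - v) with hydef
      have hy0 : y < 0 := by rw [hydef]; exact one_div_neg.mpr hxv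
      have hyge : y1 ≤ y := by
        rw [hydef, hy1def]
        exact recip_le_recip_neg (by linarith) (by linarith)
      exact hconc y (ne_of_lt hy0) ⟨hyge, by linarith⟩
        (by rw [hydef, one_div_one_div]; ring)
    · -- e2 ≤ x
      have hxv : 0 < x - v := by linarith [hv2]
      set y : ℝ := 1 / (x - v) with hydef
      have hy0 : 0 < y := by rw [hydef]; exact one_div_pos.mpr hxv
      have hyle : y ≤ y2 := by
        rw [hydef, hy2def]
        exact one_div_le_one_div_of_le (by linarith) (by linarith)
      exact hconc y (ne_of_gt hy0) ⟨by linarith, hyle⟩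
        (by rw [hydef, one_div_one_div]; ring)

/-- CMS-type upper bounds for rational Gaussian quadrature with a
single complex pole `s ∈ ℂ \ ℝ` of multiplicity `m−1` (denominator
`|q_{m−1}(λ)|² = ((λ−Re s)² + (Im s)²)^{m−1}`): if the quadrature identity holds
for all numerators of degree `≤ 2m−2`, then
`μ_n([θ_k, θ_{k+1}]) ≤ ‖c k‖² + ‖c_{k+1}‖²` for `k = 1,…,m−1`, and
`μ_n((−∞, θ_1]) + μ_n([θ_m, ∞)) ≤ ‖c 1‖² + ‖c m‖²`. -/
theorem stmt_19 {n m : ℕ} (hm : 0 < m)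
    (lam : Fin n → ℝ) (hlam : StrictMono lam)
    (w : Fin n → ℂ) (hw : ∀ j, w j ≠ 0)
    (θ : Fin m → ℝ) (hθ : StrictMono θ) (c : Fin m → ℂ)
    (s : ℂ) (hs : s.im ≠ 0)
    (hquad : ∀ p : Polynomial ℝ, p.natDegree ≤ 2 * m - 2 →
      ∑ j, ‖w j‖ ^ 2 * (p.eval (lam j) / ((lam j - s.re) ^ 2 + s.im ^ 2) ^ (m - 1))
        = ∑ j, ‖c j‖ ^ 2 * (p.eval (θ j) / ((θ j - s.re) ^ 2 + s.im ^ 2) ^ (m - 1))) :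
    (∀ (k : Fin m) (hk : (k : ℕ) + 1 < m),
      (∑ j ∈ Finset.univ.filter fun j => θ k ≤ lam j ∧ lam j ≤ θ ⟨(k : ℕ) + 1, hk⟩,
          ‖w j‖ ^ 2)
        ≤ ‖c k‖ ^ 2 + ‖c ⟨(k : ℕ) + 1, hk⟩‖ ^ 2) ∧
    (∑ j ∈ Finset.univ.filter fun j =>
        lam j ≤ θ ⟨0, hm⟩ ∨ θ ⟨m - 1, Nat.sub_lt hm Nat.one_pos⟩ ≤ lam j, ‖w j‖ ^ 2)
      ≤ ‖c ⟨0, hm⟩‖ ^ 2 + ‖c ⟨m - 1, Nat.sub_lt hm Nat.one_pos⟩‖ ^ 2 := by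
  constructor
  · intro k hk
    have hne : k ≠ (⟨(k : ℕ) + 1, hk⟩ : Fin m) := by
      intro h
      have := congrArg (Fin.val) h
      simp at this
    obtain ⟨P, hdeg, hzero, hP1, hP2, hPnn, hmaj⟩ :=
      middle_poly θ hθ s.re s.im hs k ⟨(k : ℕ) + 1, hk⟩ rfl
    apply quad_key lam w θ c s hs hquad k ⟨(k : ℕ) + 1, hk⟩ hne P hdeg hzero hP1 hP2 hPnn
    intro j hj
    rw [Finset.mem_filter] at hj
    exact hmaj (lam j) hj.2.1 hj.2.2
  · by_cases hm1 : m = 1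
    · subst hm1
      have hq := hquad 1 (by simp)
      norm_num at hq
      have hfil : (Finset.univ.filter fun j =>
          lam j ≤ θ ⟨0, hm⟩ ∨ θ ⟨1 - 1, Nat.sub_lt hm Nat.one_pos⟩ ≤ lam j)
          = Finset.univ := by
        ext j
        simp only [Finset.mem_filter, Finset.mem_univ, true_and, iff_true]
        rcases le_total (lam j) (θ ⟨0, hm⟩) with h | h
        · exact Or.inl h
        · exact Or.inr h
      rw [hfil]
      have e0 : (⟨0, hm⟩ : Fin 1) = 0 := Subsingleton.elim _ _
      have e1 : (⟨1 - 1, Nat.sub_lt hm Nat.one_pos⟩ : Fin 1) = 0 := Subsingleton.elim _ _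
      first
      | rw [e0, e1, hq]
      | rw [e0, hq]
      | rw [hq]
      nlinarith [sq_nonneg ‖c 0‖]
    · have hm2 : 2 ≤ m := by omega
      have hne : (⟨0, hm⟩ : Fin m) ≠ ⟨m - 1, Nat.sub_lt hm Nat.one_pos⟩ := by
        intro h
        have := congrArg (Fin.val) h
        simp at this
        omega
      obtain ⟨P, hdeg, hzero, hP1, hP2, hPnn, hmaj⟩ :=
        outer_poly hm2 θ hθ s.re s.im hs ⟨0, hm⟩ ⟨m - 1, Nat.sub_lt hm Nat.one_pos⟩ rfl rfl
      apply quad_key lam w θ c s hs hquad _ _ hne P hdeg hzero hP1 hP2 hPnn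
      intro j hj
      rw [Finset.mem_filter] at hj
      exact hmaj (lam j) hj.2
end
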